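/- Let q be a prime power and n, m, δ positive integers with δ ≤ min{n,m}. Any rank-metric code C ⊆ Mat(n×m, F_q) with minimum rank distance at least δ satisfies |C| ≤ q^{max{m,n}·(min{m,n} − δ + 1)} (Singleton-like bound for rank-metric codes). -/

import Mathlib

open Module

lemma rank_le_card_nonzero_rows {F : Type*} [Field F] {n m : ℕ}
    (M : Matrix (Fin n) (Fin m) F) (S : Finset (Fin n))
    (h : ∀ i ∉ S, M i = 0) : M.rank ≤ S.card := by
  classical
  rw [Matrix.rank_eq_finrank_span_row]
  have hsub : Submodule.span F (Set.range M) ≤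
      Submodule.span F ((S.image M : Finset _) : Set _) := by
    rw [Submodule.span_le]
    rintro _ ⟨i, rfl⟩
    by_cases hi : i ∈ S
    · exact Submodule.subset_span (Finset.mem_coe.2 (Finset.mem_image_of_mem M hi))
    · rw [h i hi]; exact Submodule.zero_mem _
  exact (Submodule.finrank_mono hsub).trans
    ((finrank_span_finset_le_card _).trans Finset.card_image_le)

lemma aux17 (F : Type*) [Field F] [Fintype F] (n m δ : ℕ)
    (hδ : 0 < δ) (hδn : δ ≤ n) (hnm : n ≤ m)
    (C : Finset (Matrix (Fin n) (Fin m) F))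
    (hdist : ∀ A ∈ C, ∀ B ∈ C, A ≠ B → δ ≤ (A - B).rank) :
    C.card ≤ Fintype.card F ^ (m * (n - δ + 1)) := by
  have hk : n - δ + 1 ≤ n := by omega
  set g : Matrix (Fin n) (Fin m) F → (Fin (n - δ + 1) → Fin m → F) :=
    fun A i j => A (Fin.castLE hk i) j with hg
  have hinj : Set.InjOn g ↑C := by
    intro A hA B hB hAB
    by_contra hne
    have hrank : δ ≤ (A - B).rank := hdist A hA B hB hne
    set S : Finset (Fin n) := Finset.univ.filter (fun i => n - δ + 1 ≤ (i : ℕ)) with hS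
    have hzero : ∀ i ∉ S, (A - B) i = 0 := by
      intro i hi
      simp only [hS, Finset.mem_filter, Finset.mem_univ, true_and, not_le] at hi
      funext j
      have := congrFun (congrFun hAB ⟨(i : ℕ), hi⟩) j
      simp only [hg] at this
      have hcast : Fin.castLE hk ⟨(i : ℕ), hi⟩ = i := rfl
      simp only [hcast] at this
      simp [this]
    have hcard : S.card ≤ δ - 1 := by
      rcases eq_or_lt_of_le (show 1 ≤ δ by omega) with h1 | h1
      · have : S = ∅ := by
          rw [hS]
          ext i
          simp only [Finset.mem_filter, Finset.mem_univ, true_and, Finset.notMem_empty,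
            iff_false, not_le]
          omega
        simp [this]
      · have hlt : n - δ + 1 < n := by omega
        have : S = Finset.Ici (⟨n - δ + 1, hlt⟩ : Fin n) := by
          rw [hS]
          ext i
          simp [Fin.le_def]
        rw [this, Fin.card_Ici]
        simp only [Fin.val_mk]
        omega
    have := rank_le_card_nonzero_rows (A - B) S hzero
    omega
  have := Finset.card_le_card_of_injOn g (fun x _ => Finset.mem_univ (g x)) hinj
  calc C.card ≤ (Finset.univ : Finset (Fin (n - δ + 1) → Fin m → F)).card := this
    _ = Fintype.card F ^ (m * (n - δ + 1)) := by
        simp [Finset.card_univ, Fintype.card_fun, ← pow_mul, mul_comm]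

theorem stmt17 (F : Type*) [Field F] [Fintype F] (n m δ : ℕ)
    (hn : 0 < n) (hm : 0 < m) (hδ : 0 < δ) (hδmin : δ ≤ min n m)
    (C : Finset (Matrix (Fin n) (Fin m) F))
    (hdist : ∀ A ∈ C, ∀ B ∈ C, A ≠ B → δ ≤ (A - B).rank) :
    C.card ≤ Fintype.card F ^ (max m n * (min m n - δ + 1)) := by
  classical
  rcases le_total n m with hnm | hmn
  · have := aux17 F n m δ hδ (by omega) hnm C hdist
    rwa [max_eq_left hnm, min_eq_right hnm]
  · have htr : Function.Injective (Matrix.transpose : Matrix (Fin n) (Fin m) F → _) :=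
      fun A B h => by simpa using congrArg Matrix.transpose h
    have hcard : (C.image Matrix.transpose).card = C.card := Finset.card_image_of_injective C htr
    have := aux17 F m n δ hδ (by omega) hmn (C.image Matrix.transpose) ?_
    · rw [hcard] at this
      rwa [max_eq_right hmn, min_eq_left hmn]
    · intro A hA B hB hAB
      obtain ⟨A', hA', rfl⟩ := Finset.mem_image.1 hA
      obtain ⟨B', hB', rfl⟩ := Finset.mem_image.1 hB
      have hne : A' ≠ B' := fun h => hAB (by rw [h])
      have : A'.transpose - B'.transpose = (A' - B').transpose := by
        ext i j; simp [Matrix.transpose]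
      rw [this, Matrix.rank_transpose]
      exact hdist A' hA' B' hB' hne
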